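/- Let g1, g2 > 0 with g2 > g1, h ≠ 0, g = g1 + 2g2, and μ > 0, and let ρh+ = (|h| + √(h² + 4gμ))/(2g). If μ < h²(2g1 + g2)/(g1 - g2)², then λ2 := μ - 3g1·ρh+² - |h|ρh+ < 0; i.e. the hexagonal pattern H with amplitude ρh+ is linearly stable under the condition μ < μ_{h2} = h²(2g1+g2)/(g1-g2)². -/

import Mathlib

/-- Hexagon stability: with `0 < g₁ < g₂`, `h ≠ 0`, `g = g₁ + 2g₂`, `μ > 0` and
`ρₕ⁺ = (|h| + √(h² + 4gμ))/(2g)`, if `μ < h²(2g₁ + g₂)/(g₁ - g₂)²` then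
`λ₂ = μ - 3g₁ρₕ⁺² - |h|ρₕ⁺ < 0`. -/
theorem hexagon_plus_stable
    (g₁ g₂ h μ : ℝ)
    (hg₁ : 0 < g₁) (hg₂ : 0 < g₂) (hg : g₁ < g₂) (hh : h ≠ 0) (hμ : 0 < μ)
    (g ρ : ℝ) (hgdef : g = g₁ + 2*g₂)
    (hρ : ρ = (|h| + Real.sqrt (h^2 + 4*g*μ))/(2*g))
    (hμ2 : μ < h^2*(2*g₁ + g₂)/(g₁ - g₂)^2) :
    μ - 3*g₁*ρ^2 - |h| *ρ < 0 := by
  subst hgdef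
  set g : ℝ := g₁ + 2*g₂ with hgdef
  have hg0 : 0 < g := by rw [hgdef]; linarith
  have habs : 0 < |h| := abs_pos.mpr hh
  have hha : |h|^2 = h^2 := sq_abs h
  have hD : 0 ≤ h^2 + 4*g*μ := by positivity
  set s := Real.sqrt (h^2 + 4*g*μ) with hs
  have hs2 : s^2 = h^2 + 4*g*μ := Real.sq_sqrt hD
  have hs0 : 0 ≤ s := Real.sqrt_nonneg _
  have h2g : 2*g*ρ = |h| + s := by
    rw [hρ]; field_simp
  have hρpos : 0 < ρ := by
    have : 0 < |h| + s := by linarith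
    nlinarith
  have hμ2' : μ*(g₁-g₂)^2 < h^2*(2*g₁+g₂) := by
    have hpos : (0:ℝ) < (g₁-g₂)^2 := by nlinarith
    calc μ*(g₁-g₂)^2 < h^2*(2*g₁+g₂)/(g₁-g₂)^2 * (g₁-g₂)^2 := by
          exact mul_lt_mul_of_pos_right hμ2 hpos
      _ = h^2*(2*g₁+g₂) := by exact div_mul_cancel₀ _ hpos.ne'
  have hsq : ((g₂-g₁)*s)^2 < (3*(g₁+g₂)*|h|)^2 := by
    have h4g := mul_lt_mul_of_pos_left hμ2' (show (0:ℝ) < 4*g by linarith)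
    rw [hgdef] at h4g
    have hc : ((g₂-g₁)*s)^2 = (g₂-g₁)^2*(h^2 + 4*(g₁+2*g₂)*μ) := by
      rw [mul_pow, hs2, hgdef]
    have hc2 : (3*(g₁+g₂)*|h|)^2 = 9*(g₁+g₂)^2*h^2 := by
      rw [mul_pow, mul_pow, hha]; ring
    rw [hc, hc2]
    nlinarith [h4g]
  have hkey : (g₂-g₁)*s < 3*(g₁+g₂)*|h| := by
    have hb : 0 < 3*(g₁+g₂)*|h| := by positivity
    nlinarith [mul_nonneg (le_of_lt (by linarith : (0:ℝ) < g₂-g₁)) hs0]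
  have hfac : (g₂-g₁)*ρ < |h| := by nlinarith
  have hseq : s = 2*g*ρ - |h| := by linarith
  have hs2' : (2*g*ρ - |h|)^2 = h^2 + 4*g*μ := by rw [← hseq]; exact hs2
  have h4 : 4*g*(g*ρ^2 - |h| * ρ - μ) = 0 := by linear_combination hs2' - hha
  have hρeq : g*ρ^2 - |h| * ρ - μ = 0 := by
    rcases mul_eq_zero.mp h4 with h' | h'
    · exfalso; linarith
    · exact h'
  rw [hgdef] at hρeq
  nlinarith [mul_pos hρpos (by linarith : (0:ℝ) < |h| - (g₂-g₁)*ρ)]
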